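/- Let H^{Λ(L)} = Σ_{(i,j)∈E} h^{(i,j)} + Σ_{k∈Λ(L)} h₁^{(k)} be a translationally-invariant nearest-neighbour Hamiltonian on the ν-dimensional cubic lattice Λ(L) = {1,…,L}^ν with open boundary conditions, whose two-body interaction terms h^{(i,j)} are positive semi-definite and have operator norm at most c. Then for all L', n ∈ ℕ and L = nL': n^ν·λ₀(H^{Λ(L')}) ≤ λ₀(H^{Λ(L)}) ≤ n^ν·λ₀(H^{Λ(L')}) + 2ν·n^ν·L'^{ν−1}·c. -/

import Mathlib

open scoped Classical ComplexOrder

set_option maxHeartbeats 2000000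

noncomputable section

/-- The global matrix of a two-body interaction `h` placed at the pair of sites `i j`
of a finite set `V` of sites: it acts as `h` on sites `i, j` and as the identity
elsewhere (standard basis of the tensor product indexed by configurations `V → S`). -/
def twoBodyAt {V S : Type*} [Fintype V] [DecidableEq V] [Fintype S] [DecidableEq S]
    (h : Matrix (S × S) (S × S) ℂ) (i j : V) :
    Matrix (V → S) (V → S) ℂ :=
  Matrix.of fun x y =>
    (if ∀ k, k ≠ i → k ≠ j → x k = y k then (1 : ℂ) else 0) * h (x i, x j) (y i, y j)

/-- The global matrix of an on-site term `h` at site `i`. -/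
def oneBodyAt {V S : Type*} [Fintype V] [DecidableEq V] [Fintype S] [DecidableEq S]
    (h : Matrix S S ℂ) (i : V) : Matrix (V → S) (V → S) ℂ :=
  Matrix.of fun x y =>
    (if ∀ k, k ≠ i → x k = y k then (1 : ℂ) else 0) * h (x i) (y i)

/-- The translationally-invariant nearest-neighbour Hamiltonian
`H^{Λ(L)} = Σ_{(i,j)∈E} h^{(i,j)} + Σ_k h₁^{(k)}` on the ν-dimensional cubic lattice
`Λ(L) = {1,…,L}^ν` with open boundary conditions, local Hilbert space `ℂ^d`,
two-body term `h k` in lattice direction `k`, and on-site term `h1`. -/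
def hamND (ν d L : ℕ) (h : Fin ν → Matrix (Fin d × Fin d) (Fin d × Fin d) ℂ)
    (h1 : Matrix (Fin d) (Fin d) ℂ) :
    Matrix ((Fin ν → Fin L) → Fin d) ((Fin ν → Fin L) → Fin d) ℂ :=
  (∑ k : Fin ν, ∑ p : Fin ν → Fin L, ∑ q : Fin ν → Fin L,
      if (∀ m, m ≠ k → p m = q m) ∧ (q k : ℕ) = (p k : ℕ) + 1
      then twoBodyAt (h k) p q else 0)
  + ∑ p : Fin ν → Fin L, oneBodyAt h1 p

/-- The set of real points of the spectrum of a matrix. -/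
def realSpec {n : Type*} [Fintype n] [DecidableEq n] (M : Matrix n n ℂ) : Set ℝ :=
  {x : ℝ | (x : ℂ) ∈ spectrum ℂ M}

/-- The ground state energy `λ₀(M)`: the smallest (real) eigenvalue. -/
def lam0 {n : Type*} [Fintype n] [DecidableEq n] (M : Matrix n n ℂ) : ℝ :=
  sInf (realSpec M)

/-- Operator norm of a matrix acting on the Euclidean (ℓ²) space. -/
def opNorm {n : Type*} [Fintype n] [DecidableEq n] (M : Matrix n n ℂ) : ℝ :=
  ‖Matrix.toEuclideanCLM (𝕜 := ℂ) M‖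

namespace GSE

open Matrix

variable {ι : Type*} [Fintype ι] [DecidableEq ι]

/-- real part of the quadratic form -/
def Qr (M : Matrix ι ι ℂ) (v : ι → ℂ) : ℝ := (dotProduct (star v) (M *ᵥ v)).re

/-- squared norm -/
def Nr (v : ι → ℂ) : ℝ := (dotProduct (star v) v).re

lemma star_dot_self (v : ι → ℂ) :
    dotProduct (star v) v = ((∑ i, Complex.normSq (v i) : ℝ) : ℂ) := by
  simp only [dotProduct, Pi.star_apply, Complex.ofReal_sum]
  refine Finset.sum_congr rfl fun i _ => ?_
  rw [RCLike.star_def, mul_comm, Complex.mul_conj]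

lemma Nr_eq_sum (v : ι → ℂ) : Nr v = ∑ i, Complex.normSq (v i) := by
  rw [Nr, star_dot_self, Complex.ofReal_re]

lemma Nr_nonneg (v : ι → ℂ) : 0 ≤ Nr v := by
  rw [Nr_eq_sum]; exact Finset.sum_nonneg fun i _ => Complex.normSq_nonneg _

lemma Nr_pos {v : ι → ℂ} (hv : v ≠ 0) : 0 < Nr v := by
  rw [Nr_eq_sum]
  obtain ⟨i, hi⟩ := Function.ne_iff.mp hv
  exact Finset.sum_pos' (fun j _ => Complex.normSq_nonneg _)
    ⟨i, Finset.mem_univ i, Complex.normSq_pos.mpr hi⟩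

lemma realSpec_eq_spectrum (M : Matrix ι ι ℂ) : realSpec M = spectrum ℝ M := by
  ext x
  rw [realSpec, Set.mem_setOf_eq]
  exact_mod_cast spectrum.algebraMap_mem_iff (S := ℂ) (R := ℝ) (A := Matrix ι ι ℂ)

lemma realSpec_herm {M : Matrix ι ι ℂ} (hM : M.IsHermitian) :
    realSpec M = Set.range hM.eigenvalues := by
  rw [realSpec_eq_spectrum]; exact hM.spectrum_real_eq_range_eigenvalues

lemma lam0_mem [Nonempty ι] {M : Matrix ι ι ℂ} (hM : M.IsHermitian) : lam0 M ∈ realSpec M := by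
  have hfin : (realSpec M).Finite := by
    rw [realSpec_herm hM]; exact Set.finite_range _
  have hne : (realSpec M).Nonempty := by
    rw [realSpec_herm hM]; exact Set.range_nonempty _
  exact hne.csInf_mem hfin

lemma lam0_le {M : Matrix ι ι ℂ} (hM : M.IsHermitian) {x : ℝ} (hx : x ∈ realSpec M) :
    lam0 M ≤ x := by
  have hfin : (realSpec M).Finite := by
    rw [realSpec_herm hM]; exact Set.finite_range _
  exact csInf_le hfin.bddBelow hx

lemma mem_spectrum_iff_exists (M : Matrix ι ι ℂ) (x : ℂ) :
    x ∈ spectrum ℂ M ↔ ∃ v, v ≠ 0 ∧ M *ᵥ v = x • v := by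
  have expand : ∀ v : ι → ℂ, (algebraMap ℂ (Matrix ι ι ℂ) x - M) *ᵥ v = x • v - M *ᵥ v := by
    intro v
    rw [Matrix.sub_mulVec, Algebra.algebraMap_eq_smul_one, Matrix.smul_mulVec,
      Matrix.one_mulVec]
  rw [spectrum.mem_iff, Matrix.isUnit_iff_isUnit_det, isUnit_iff_ne_zero, not_ne_iff,
    ← Matrix.exists_mulVec_eq_zero_iff]
  constructor
  · rintro ⟨v, hv, hv2⟩
    exact ⟨v, hv, by rw [expand v] at hv2; exact (sub_eq_zero.mp hv2).symm⟩
  · rintro ⟨v, hv, hv2⟩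
    exact ⟨v, hv, by rw [expand v, hv2, sub_self]⟩

lemma exists_ground [Nonempty ι] {M : Matrix ι ι ℂ} (hM : M.IsHermitian) :
    ∃ v, v ≠ 0 ∧ M *ᵥ v = (lam0 M : ℂ) • v :=
  (mem_spectrum_iff_exists M _).mp (lam0_mem hM)

lemma smul_one_herm (r : ℝ) : ((r : ℂ) • (1 : Matrix ι ι ℂ)).IsHermitian := by
  rw [Matrix.IsHermitian, Matrix.conjTranspose_smul, Matrix.conjTranspose_one,
    RCLike.star_def, Complex.conj_ofReal]

lemma algebraMap_real_eq (r : ℝ) :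
    algebraMap ℝ (Matrix ι ι ℂ) r = (r : ℂ) • (1 : Matrix ι ι ℂ) := by
  rw [Algebra.algebraMap_eq_smul_one]
  ext i j
  simp [Complex.real_smul]

lemma lam0_shift_psd [Nonempty ι] {M : Matrix ι ι ℂ} (hM : M.IsHermitian) :
    (M - (lam0 M : ℂ) • 1).PosSemidef := by
  have herm : (M - (lam0 M : ℂ) • 1).IsHermitian := hM.sub (smul_one_herm _)
  refine herm.posSemidef_iff_eigenvalues_nonneg.mpr fun i => ?_
  show (0:ℝ) ≤ _
  have hmem := herm.eigenvalues_mem_spectrum_real (𝕜 := ℂ) i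
  have heq : algebraMap ℝ (Matrix ι ι ℂ) (herm.eigenvalues i + lam0 M) - M
      = algebraMap ℝ (Matrix ι ι ℂ) (herm.eigenvalues i) - (M - (lam0 M : ℂ) • 1) := by
    rw [map_add, algebraMap_real_eq (lam0 M)]; abel
  have hmem2 : herm.eigenvalues i + lam0 M ∈ realSpec M := by
    rw [realSpec_eq_spectrum, spectrum.mem_iff, heq]
    rw [spectrum.mem_iff] at hmem
    exact hmem
  have := lam0_le hM hmem2
  linarith

lemma ofReal_mul_re (r : ℝ) (z : ℂ) : ((r : ℂ) * z).re = r * z.re := by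
  simp [Complex.mul_re]

lemma rayleigh_lower [Nonempty ι] {M : Matrix ι ι ℂ} (hM : M.IsHermitian) (v : ι → ℂ) :
    lam0 M * Nr v ≤ Qr M v := by
  have h0 := (lam0_shift_psd hM).dotProduct_mulVec_nonneg v
  have hexp : dotProduct (star v) ((M - (lam0 M : ℂ) • 1) *ᵥ v)
      = dotProduct (star v) (M *ᵥ v) - (lam0 M : ℂ) * dotProduct (star v) v := by
    rw [Matrix.sub_mulVec, dotProduct_sub, Matrix.smul_mulVec,
      Matrix.one_mulVec, dotProduct_smul, smul_eq_mul]
  rw [hexp] at h0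
  have := (Complex.le_def.mp h0).1
  simp only [Complex.zero_re, Complex.sub_re, ofReal_mul_re] at this
  rw [Qr, Nr]
  linarith

lemma qr_eigen {M : Matrix ι ι ℂ} {v : ι → ℂ} {r : ℝ} (hv : M *ᵥ v = (r : ℂ) • v) :
    Qr M v = r * Nr v := by
  rw [Qr, hv, dotProduct_smul, smul_eq_mul, ofReal_mul_re, Nr]

lemma qr_nonneg_of_psd {M : Matrix ι ι ℂ} (hM : M.PosSemidef) (v : ι → ℂ) :
    0 ≤ Qr M v := by
  have := (Complex.le_def.mp (hM.dotProduct_mulVec_nonneg v)).1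
  simpa [Qr] using this

lemma psd_smul_one_sub [Nonempty ι] {M : Matrix ι ι ℂ} (hM : M.IsHermitian) {c : ℝ}
    (hle : opNorm M ≤ c) : ((c : ℂ) • 1 - M).PosSemidef := by
  have herm : ((c : ℂ) • 1 - M).IsHermitian := (smul_one_herm c).sub hM
  refine herm.posSemidef_iff_eigenvalues_nonneg.mpr fun i => ?_
  show (0:ℝ) ≤ _
  set μ := herm.eigenvalues i with hμ
  have hmem := herm.eigenvalues_mem_spectrum_real (𝕜 := ℂ) i
  rw [← realSpec_eq_spectrum, realSpec, Set.mem_setOf_eq] at hmem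
  have hshift : ((c - μ : ℝ) : ℂ) ∈ spectrum ℂ M := by
    rw [spectrum.mem_iff] at hmem ⊢
    intro hu
    apply hmem
    have heq : algebraMap ℂ (Matrix ι ι ℂ) ((μ : ℝ) : ℂ) - ((c : ℂ) • 1 - M)
        = -(algebraMap ℂ (Matrix ι ι ℂ) (((c - μ : ℝ)) : ℂ) - M) := by
      rw [Algebra.algebraMap_eq_smul_one, Algebra.algebraMap_eq_smul_one]
      push_cast
      rw [sub_smul]
      abel
    rw [heq]
    exact hu.neg
  have hmem3 : ((c - μ : ℝ) : ℂ) ∈ spectrum ℂ (Matrix.toEuclideanCLM (𝕜 := ℂ) M) := by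
    rw [AlgEquiv.spectrum_eq (Matrix.toEuclideanCLM (𝕜 := ℂ) (n := ι))]
    exact hshift
  have hb := spectrum.norm_le_norm_of_mem hmem3
  rw [Complex.norm_real] at hb
  have : |c - μ| ≤ c := le_trans hb hle
  have h2 := le_abs_self (c - μ)
  linarith

lemma rayleigh_upper_of_opNorm [Nonempty ι] {M : Matrix ι ι ℂ} (hM : M.IsHermitian) {c : ℝ}
    (hle : opNorm M ≤ c) (v : ι → ℂ) : Qr M v ≤ c * Nr v := by
  have h0 := (psd_smul_one_sub hM hle).dotProduct_mulVec_nonneg v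
  have hexp : dotProduct (star v) (((c : ℂ) • 1 - M) *ᵥ v)
      = (c : ℂ) * dotProduct (star v) v - dotProduct (star v) (M *ᵥ v) := by
    rw [Matrix.sub_mulVec, dotProduct_sub, Matrix.smul_mulVec,
      Matrix.one_mulVec, dotProduct_smul, smul_eq_mul]
  rw [hexp] at h0
  have := (Complex.le_def.mp h0).1
  simp only [Complex.zero_re, Complex.sub_re, ofReal_mul_re] at this
  rw [Qr, Nr]
  linarith


section Lift
variable {X W Y : Type*} [Fintype X] [DecidableEq X] [Fintype W] [DecidableEq W]
  [Fintype Y] [DecidableEq Y]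

/-- lift of a matrix on `W` to a matrix on `X ≃ W × Y`, acting as identity on `Y`. -/
def liftE (M : Matrix W W ℂ) (e : X ≃ W × Y) : Matrix X X ℂ :=
  Matrix.of fun x y => (if (e x).2 = (e y).2 then (1 : ℂ) else 0) * M (e x).1 (e y).1

/-- section of a vector on `X` at environment `y : Y`. -/
def sec (e : X ≃ W × Y) (v : X → ℂ) (y : Y) : W → ℂ := fun w => v (e.symm (w, y))

lemma liftE_dot (M : Matrix W W ℂ) (e : X ≃ W × Y) (v : X → ℂ) :
    dotProduct (star v) (liftE M e *ᵥ v)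
      = ∑ y : Y, dotProduct (star (sec e v y)) (M *ᵥ (sec e v y)) := by
  have key : ∀ x x' : X, star (v x) * (liftE M e x x' * v x')
      = if (e x).2 = (e x').2 then star (v x) * (M (e x).1 (e x').1 * v x') else 0 := by
    intro x x'
    by_cases hc : (e x).2 = (e x').2 <;> simp [liftE, hc]
  calc dotProduct (star v) (liftE M e *ᵥ v)
      = ∑ x, ∑ x', star (v x) * (liftE M e x x' * v x') := by
        simp [dotProduct, Matrix.mulVec, Finset.mul_sum]
    _ = ∑ x, ∑ x', if (e x).2 = (e x').2
          then star (v x) * (M (e x).1 (e x').1 * v x') else 0 := by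
        simp only [key]
    _ = ∑ p : W × Y, ∑ p' : W × Y, if p.2 = p'.2
          then star (v (e.symm p)) * (M p.1 p'.1 * v (e.symm p')) else 0 := by
        rw [← Equiv.sum_comp e.symm
          (fun x => ∑ x', if (e x).2 = (e x').2
            then star (v x) * (M (e x).1 (e x').1 * v x') else 0)]
        refine Finset.sum_congr rfl fun p _ => ?_
        rw [← Equiv.sum_comp e.symm
          (fun x' => if (e (e.symm p)).2 = (e x').2
            then star (v (e.symm p)) * (M (e (e.symm p)).1 (e x').1 * v x') else 0)]
        simp
    _ = ∑ y : Y, ∑ w, ∑ w', star (v (e.symm (w, y))) * (M w w' * v (e.symm (w', y))) := by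
        rw [Fintype.sum_prod_type]
        rw [Finset.sum_comm]
        refine Finset.sum_congr rfl fun y _ => ?_
        refine Finset.sum_congr rfl fun w _ => ?_
        rw [Fintype.sum_prod_type]
        refine Finset.sum_congr rfl fun w' _ => ?_
        simp
    _ = ∑ y : Y, dotProduct (star (sec e v y)) (M *ᵥ (sec e v y)) := by
        refine Finset.sum_congr rfl fun y _ => ?_
        simp [dotProduct, Matrix.mulVec, sec, Finset.mul_sum]

lemma liftE_one (e : X ≃ W × Y) : liftE (1 : Matrix W W ℂ) e = 1 := by
  ext x y
  by_cases hxy : x = y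
  · subst hxy; simp [liftE, Matrix.one_apply]
  · have hne : e x ≠ e y := fun hc => hxy (e.injective hc)
    have h2 : (e x).1 ≠ (e y).1 ∨ (e x).2 ≠ (e y).2 := by
      by_contra hcc
      push_neg at hcc
      exact hne (Prod.ext hcc.1 hcc.2)
    rcases h2 with hc | hc
    · simp [liftE, Matrix.one_apply, hc, hxy]
    · simp [liftE, Matrix.one_apply, hc, hxy]

lemma liftE_herm {M : Matrix W W ℂ} (hM : M.IsHermitian) (e : X ≃ W × Y) :
    (liftE M e).IsHermitian := by
  ext x y
  simp only [Matrix.conjTranspose_apply, liftE, Matrix.of_apply, star_mul']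
  by_cases hc : (e y).2 = (e x).2
  · have hc' : (e x).2 = (e y).2 := hc.symm
    rw [if_pos hc, if_pos hc', star_one, ← Matrix.conjTranspose_apply, hM]
  · have hc' : (e x).2 ≠ (e y).2 := fun hh => hc hh.symm
    simp only [if_neg hc, if_neg hc', star_zero, zero_mul, mul_zero]

lemma qr_liftE (M : Matrix W W ℂ) (e : X ≃ W × Y) (v : X → ℂ) :
    Qr (liftE M e) v = ∑ y : Y, Qr M (sec e v y) := by
  rw [Qr, liftE_dot, Complex.re_sum]
  rfl

lemma nr_liftE (e : X ≃ W × Y) (v : X → ℂ) : Nr v = ∑ y : Y, Nr (sec e v y) := by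
  have h1 : Nr v = Qr (liftE 1 e) v := by
    rw [liftE_one, Qr, Matrix.one_mulVec, Nr]
  rw [h1, qr_liftE]
  refine Finset.sum_congr rfl fun y _ => ?_
  rw [Qr, Matrix.one_mulVec, Nr]

lemma qr_liftE_ge {M : Matrix W W ℂ} [Nonempty W] (hM : M.IsHermitian) (e : X ≃ W × Y)
    (v : X → ℂ) : lam0 M * Nr v ≤ Qr (liftE M e) v := by
  rw [qr_liftE, nr_liftE e v, Finset.mul_sum]
  exact Finset.sum_le_sum fun y _ => rayleigh_lower hM _

lemma qr_liftE_nonneg {M : Matrix W W ℂ} (hM : M.PosSemidef) (e : X ≃ W × Y)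
    (v : X → ℂ) : 0 ≤ Qr (liftE M e) v := by
  rw [qr_liftE]
  exact Finset.sum_nonneg fun y _ => qr_nonneg_of_psd hM _

lemma qr_liftE_le {M : Matrix W W ℂ} [Nonempty W] (hM : M.IsHermitian) {c : ℝ}
    (hle : opNorm M ≤ c) (e : X ≃ W × Y) (v : X → ℂ) :
    Qr (liftE M e) v ≤ c * Nr v := by
  rw [qr_liftE, nr_liftE e v, Finset.mul_sum]
  exact Finset.sum_le_sum fun y _ => rayleigh_upper_of_opNorm hM hle _

end Lift

section TwoBody
variable {V S : Type*} [Fintype V] [DecidableEq V] [Fintype S] [DecidableEq S]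

/-- splitting a configuration space at a pair of distinct sites. -/
def pairSplit (i j : V) (hij : i ≠ j) (S : Type*) :
    (V → S) ≃ (S × S) × ({v // v ≠ i ∧ v ≠ j} → S) where
  toFun x := ((x i, x j), fun v => x v.1)
  invFun z v := if h : v = i then z.1.1 else if h' : v = j then z.1.2 else z.2 ⟨v, h, h'⟩
  left_inv x := by
    funext v
    by_cases h : v = i
    · subst h; simp
    · by_cases h' : v = j
      · subst h'; simp [h]
      · simp [h, h']
  right_inv z := by
    refine Prod.ext (Prod.ext ?_ ?_) (funext fun v => ?_) <;> simp only []
    · simp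
    · simp [hij.symm]
    · simp [v.2.1, v.2.2]

lemma twoBodyAt_eq_liftE (h : Matrix (S × S) (S × S) ℂ) (i j : V) (hij : i ≠ j) :
    twoBodyAt h i j = liftE h (pairSplit i j hij S) := by
  ext x y
  simp only [twoBodyAt, liftE, Matrix.of_apply, pairSplit, Equiv.coe_fn_mk]
  congr 1
  refine if_congr ?_ rfl rfl
  constructor
  · intro hcond
    funext v
    exact hcond v.1 v.2.1 v.2.2
  · intro hcond k hk1 hk2
    exact congrFun hcond ⟨k, hk1, hk2⟩

lemma oneBodyAt_eq_liftE (h : Matrix S S ℂ) (i : V) :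
    oneBodyAt h i = liftE h (Equiv.funSplitAt i S) := by
  ext x y
  simp only [oneBodyAt, liftE, Matrix.of_apply, Equiv.funSplitAt_apply]
  congr 1
  refine if_congr ?_ rfl rfl
  constructor
  · intro hcond
    funext v
    exact hcond v.1 v.2
  · intro hcond k hk
    exact congrFun hcond ⟨k, hk⟩

end TwoBody

section LiftAlg
variable {X W Y : Type*} [Fintype X] [DecidableEq X] [Fintype W] [DecidableEq W]
  [Fintype Y] [DecidableEq Y]

lemma liftE_addm (M N : Matrix W W ℂ) (e : X ≃ W × Y) :
    liftE (M + N) e = liftE M e + liftE N e := by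
  ext x y
  simp [liftE, mul_add]

lemma liftE_zero (e : X ≃ W × Y) : liftE (0 : Matrix W W ℂ) e = 0 := by
  ext x y
  simp [liftE]

lemma liftE_summ {γ : Type*} (s : Finset γ) (f : γ → Matrix W W ℂ) (e : X ≃ W × Y) :
    liftE (∑ i ∈ s, f i) e = ∑ i ∈ s, liftE (f i) e := by
  classical
  induction s using Finset.induction_on with
  | empty => simp [liftE_zero]
  | insert _ _ ha ih => rw [Finset.sum_insert ha, Finset.sum_insert ha, liftE_addm, ih]

lemma ind_mul_ind (P Q R : Prop) [Decidable P] [Decidable Q] [Decidable R]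
    (hiff : P ∧ Q ↔ R) :
    (if P then (1 : ℂ) else 0) * (if Q then (1 : ℂ) else 0) = if R then (1 : ℂ) else 0 := by
  by_cases hP : P
  · by_cases hQ : Q
    · simp [hP, hQ, hiff.mp ⟨hP, hQ⟩]
    · have hR : ¬R := fun hR => hQ (hiff.mpr hR).2
      simp [hP, hQ, hR]
  · have hR : ¬R := fun hR => hP (hiff.mpr hR).1
    simp [hP, hR]

end LiftAlg

section Lattice

variable (ν n L : ℕ) (hL : 0 < L)

/-- `Fin (n*L) ≃ Fin n × Fin L` by euclidean division. -/
def coordEquiv : Fin (n * L) ≃ Fin n × Fin L where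
  toFun j := (⟨(j : ℕ) / L, by
      have hj := j.2
      exact (Nat.div_lt_iff_lt_mul hL).mpr hj⟩,
    ⟨(j : ℕ) % L, Nat.mod_lt _ hL⟩)
  invFun p := ⟨L * (p.1 : ℕ) + (p.2 : ℕ), by
      have h1 : (p.1 : ℕ) + 1 ≤ n := p.1.2
      have h2 : (p.2 : ℕ) < L := p.2.2
      calc L * (p.1 : ℕ) + (p.2 : ℕ) < L * ((p.1 : ℕ) + 1) := by
            rw [Nat.mul_add, Nat.mul_one]; omega
        _ ≤ L * n := Nat.mul_le_mul_left L h1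
        _ = n * L := Nat.mul_comm L n⟩
  left_inv j := Fin.ext (Nat.div_add_mod (j : ℕ) L)
  right_inv p := by
    refine Prod.ext (Fin.ext ?_) (Fin.ext ?_)
    · show (L * (p.1 : ℕ) + (p.2 : ℕ)) / L = (p.1 : ℕ)
      rw [Nat.mul_add_div hL, Nat.div_eq_of_lt p.2.2, add_zero]
    · show (L * (p.1 : ℕ) + (p.2 : ℕ)) % L = (p.2 : ℕ)
      rw [Nat.mul_add_mod, Nat.mod_eq_of_lt p.2.2]

/-- coordinatewise version on sites. -/
def siteEquiv : (Fin ν → Fin (n * L)) ≃ (Fin ν → Fin n) × (Fin ν → Fin L) where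
  toFun v := (fun k => (coordEquiv n L hL (v k)).1, fun k => (coordEquiv n L hL (v k)).2)
  invFun p k := (coordEquiv n L hL).symm (p.1 k, p.2 k)
  left_inv v := funext fun k => by simp
  right_inv p := Prod.ext (funext fun k => by simp) (funext fun k => by simp)

lemma siteEquiv_symm_val (b : Fin ν → Fin n) (p : Fin ν → Fin L) (m : Fin ν) :
    (((siteEquiv ν n L hL).symm (b, p)) m : ℕ) = L * (b m : ℕ) + (p m : ℕ) := rfl

variable (S : Type*) [Fintype S] [DecidableEq S]

/-- configurations on the big lattice as box-indexed families of small configurations -/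
def confE : ((Fin ν → Fin (n * L)) → S) ≃ ((Fin ν → Fin n) → (Fin ν → Fin L) → S) :=
  (Equiv.arrowCongr (siteEquiv ν n L hL) (Equiv.refl S)).trans
    (Equiv.curry (Fin ν → Fin n) (Fin ν → Fin L) S)

lemma confE_apply (x : (Fin ν → Fin (n * L)) → S) (b : Fin ν → Fin n) (p : Fin ν → Fin L) :
    confE ν n L hL S x b p = x ((siteEquiv ν n L hL).symm (b, p)) := rfl

/-- splitting the big configuration space at box `b` -/
def eBox (b : Fin ν → Fin n) :
    ((Fin ν → Fin (n * L)) → S)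
      ≃ ((Fin ν → Fin L) → S) × ({b' // b' ≠ b} → ((Fin ν → Fin L) → S)) :=
  (confE ν n L hL S).trans (Equiv.funSplitAt b _)

lemma eBox_fst (b : Fin ν → Fin n) (x : (Fin ν → Fin (n * L)) → S) :
    (eBox ν n L hL S b x).1 = confE ν n L hL S x b := rfl

lemma eBox_snd_eq_iff (b : Fin ν → Fin n) (x y : (Fin ν → Fin (n * L)) → S) :
    (eBox ν n L hL S b x).2 = (eBox ν n L hL S b y).2
      ↔ ∀ b', b' ≠ b → confE ν n L hL S x b' = confE ν n L hL S y b' := by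
  constructor
  · intro hc b' hb'
    exact congrFun hc ⟨b', hb'⟩
  · intro hc
    funext b'
    exact hc b'.1 b'.2

lemma box_cond2_iff (b : Fin ν → Fin n) (p' q' : Fin ν → Fin L)
    (x y : (Fin ν → Fin (n * L)) → S) :
    ((∀ b', b' ≠ b → confE ν n L hL S x b' = confE ν n L hL S y b')
      ∧ (∀ r, r ≠ p' → r ≠ q' → confE ν n L hL S x b r = confE ν n L hL S y b r))
    ↔ ∀ v, v ≠ (siteEquiv ν n L hL).symm (b, p') → v ≠ (siteEquiv ν n L hL).symm (b, q')
        → x v = y v := by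
  constructor
  · rintro ⟨henv, hin⟩ v hv1 hv2
    have hv : v = (siteEquiv ν n L hL).symm (((siteEquiv ν n L hL) v).1,
        ((siteEquiv ν n L hL) v).2) := by
      rw [Prod.mk.eta, Equiv.symm_apply_apply]
    by_cases hbb : ((siteEquiv ν n L hL) v).1 = b
    · have hp1 : ((siteEquiv ν n L hL) v).2 ≠ p' := fun hcc => hv1 (by rw [hv, hbb, hcc])
      have hp2 : ((siteEquiv ν n L hL) v).2 ≠ q' := fun hcc => hv2 (by rw [hv, hbb, hcc])
      have := hin _ hp1 hp2
      rw [confE_apply, confE_apply] at this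
      rw [hv, hbb]
      exact this
    · have := congrFun (henv _ hbb) ((siteEquiv ν n L hL) v).2
      rw [confE_apply, confE_apply] at this
      rw [hv]
      exact this
  · intro hbig
    constructor
    · intro b' hb'
      funext r
      rw [confE_apply, confE_apply]
      refine hbig _ (fun hcc => hb' ?_) (fun hcc => hb' ?_)
      · exact (Prod.mk.injEq _ _ _ _).mp ((siteEquiv ν n L hL).symm.injective hcc) |>.1
      · exact (Prod.mk.injEq _ _ _ _).mp ((siteEquiv ν n L hL).symm.injective hcc) |>.1
    · intro r hr1 hr2
      rw [confE_apply, confE_apply]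
      refine hbig _ (fun hcc => hr1 ?_) (fun hcc => hr2 ?_)
      · exact (Prod.mk.injEq _ _ _ _).mp ((siteEquiv ν n L hL).symm.injective hcc) |>.2
      · exact (Prod.mk.injEq _ _ _ _).mp ((siteEquiv ν n L hL).symm.injective hcc) |>.2

lemma box_cond1_iff (b : Fin ν → Fin n) (p' : Fin ν → Fin L)
    (x y : (Fin ν → Fin (n * L)) → S) :
    ((∀ b', b' ≠ b → confE ν n L hL S x b' = confE ν n L hL S y b')
      ∧ (∀ r, r ≠ p' → confE ν n L hL S x b r = confE ν n L hL S y b r))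
    ↔ ∀ v, v ≠ (siteEquiv ν n L hL).symm (b, p') → x v = y v := by
  constructor
  · rintro ⟨henv, hin⟩ v hv1
    have hv : v = (siteEquiv ν n L hL).symm (((siteEquiv ν n L hL) v).1,
        ((siteEquiv ν n L hL) v).2) := by
      rw [Prod.mk.eta, Equiv.symm_apply_apply]
    by_cases hbb : ((siteEquiv ν n L hL) v).1 = b
    · have hp1 : ((siteEquiv ν n L hL) v).2 ≠ p' := fun hcc => hv1 (by rw [hv, hbb, hcc])
      have := hin _ hp1
      rw [confE_apply, confE_apply] at this
      rw [hv, hbb]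
      exact this
    · have := congrFun (henv _ hbb) ((siteEquiv ν n L hL) v).2
      rw [confE_apply, confE_apply] at this
      rw [hv]
      exact this
  · intro hbig
    constructor
    · intro b' hb'
      funext r
      rw [confE_apply, confE_apply]
      refine hbig _ (fun hcc => hb' ?_)
      exact (Prod.mk.injEq _ _ _ _).mp ((siteEquiv ν n L hL).symm.injective hcc) |>.1
    · intro r hr1
      rw [confE_apply, confE_apply]
      refine hbig _ (fun hcc => hr1 ?_)
      exact (Prod.mk.injEq _ _ _ _).mp ((siteEquiv ν n L hL).symm.injective hcc) |>.2

lemma liftE_twoBodyAt_eBox (g : Matrix (S × S) (S × S) ℂ) (b : Fin ν → Fin n)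
    (p' q' : Fin ν → Fin L) :
    liftE (twoBodyAt g p' q') (eBox ν n L hL S b)
      = twoBodyAt g ((siteEquiv ν n L hL).symm (b, p')) ((siteEquiv ν n L hL).symm (b, q')) := by
  ext x y
  show (if (eBox ν n L hL S b x).2 = (eBox ν n L hL S b y).2 then (1:ℂ) else 0)
      * twoBodyAt g p' q' (eBox ν n L hL S b x).1 (eBox ν n L hL S b y).1 = _
  rw [eBox_fst, eBox_fst]
  show _ * ((if ∀ r, r ≠ p' → r ≠ q' → confE ν n L hL S x b r = confE ν n L hL S y b r
      then (1:ℂ) else 0) * g _ _) = _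
  rw [← mul_assoc,
    ind_mul_ind _ _ _ (((eBox_snd_eq_iff ν n L hL S b x y).and Iff.rfl).trans
      (box_cond2_iff ν n L hL S b p' q' x y))]
  rfl

lemma liftE_oneBodyAt_eBox (g : Matrix S S ℂ) (b : Fin ν → Fin n) (p' : Fin ν → Fin L) :
    liftE (oneBodyAt g p') (eBox ν n L hL S b)
      = oneBodyAt g ((siteEquiv ν n L hL).symm (b, p')) := by
  ext x y
  show (if (eBox ν n L hL S b x).2 = (eBox ν n L hL S b y).2 then (1:ℂ) else 0)
      * oneBodyAt g p' (eBox ν n L hL S b x).1 (eBox ν n L hL S b y).1 = _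
  rw [eBox_fst, eBox_fst]
  show _ * ((if ∀ r, r ≠ p' → confE ν n L hL S x b r = confE ν n L hL S y b r
      then (1:ℂ) else 0) * g _ _) = _
  rw [← mul_assoc,
    ind_mul_ind _ _ _ (((eBox_snd_eq_iff ν n L hL S b x y).and Iff.rfl).trans
      (box_cond1_iff ν n L hL S b p' x y))]
  rfl

end Lattice

section Arith

lemma split_nat {L a a' r r' : ℕ} (hr : r < L) (hr' : r' < L)
    (heq : L * a + r = L * a' + r') : a = a' ∧ r = r' := by
  have hL : 0 < L := Nat.pos_of_ne_zero (by omega)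
  have h1 : (L * a + r) / L = a := by
    rw [Nat.mul_add_div hL, Nat.div_eq_of_lt hr, add_zero]
  have h2 : (L * a' + r') / L = a' := by
    rw [Nat.mul_add_div hL, Nat.div_eq_of_lt hr', add_zero]
  have haa : a = a' := by rw [← h1, ← h2, heq]
  subst haa
  exact ⟨rfl, Nat.add_left_cancel heq⟩

variable {ν n L : ℕ}

lemma arith_iff (hL : 0 < L) (k : Fin ν) (b b'' : Fin ν → Fin n)
    (p' q' : Fin ν → Fin L) :
    (((∀ m, m ≠ k → (siteEquiv ν n L hL).symm (b, p') m = (siteEquiv ν n L hL).symm (b'', q') m)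
        ∧ (((siteEquiv ν n L hL).symm (b'', q') k : ℕ)
            = ((siteEquiv ν n L hL).symm (b, p') k : ℕ) + 1))
      ∧ ¬(((siteEquiv ν n L hL).symm (b, p') k : ℕ) % L = L - 1))
    ↔ b'' = b ∧ ((∀ m, m ≠ k → p' m = q' m) ∧ (q' k : ℕ) = (p' k : ℕ) + 1) := by
  constructor
  · rintro ⟨⟨hoff, hk⟩, hcross⟩
    rw [siteEquiv_symm_val, siteEquiv_symm_val] at hk
    rw [siteEquiv_symm_val, Nat.mul_add_mod, Nat.mod_eq_of_lt (p' k).2] at hcross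
    have hpk1 : (p' k : ℕ) + 1 < L := by
      have := (p' k).2
      omega
    have hks := split_nat (q' k).2 hpk1 (by rw [hk, Nat.add_assoc])
    have hoffs : ∀ m, m ≠ k → b m = b'' m ∧ p' m = q' m := by
      intro m hm
      have hh := congrArg Fin.val (hoff m hm)
      rw [siteEquiv_symm_val, siteEquiv_symm_val] at hh
      obtain ⟨h1, h2⟩ := split_nat (p' m).2 (q' m).2 hh
      exact ⟨Fin.ext h1, Fin.ext h2⟩
    refine ⟨funext fun m => ?_, fun m hm => (hoffs m hm).2, hks.2⟩
    by_cases hm : m = k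
    · subst hm; exact Fin.ext hks.1
    · exact ((hoffs m hm).1).symm
  · rintro ⟨rfl, hoff, hk⟩
    refine ⟨⟨fun m hm => Fin.ext ?_, ?_⟩, ?_⟩
    · rw [siteEquiv_symm_val, siteEquiv_symm_val, hoff m hm]
    · rw [siteEquiv_symm_val, siteEquiv_symm_val, hk, Nat.add_assoc]
    · rw [siteEquiv_symm_val, Nat.mul_add_mod, Nat.mod_eq_of_lt (p' k).2]
      have h1 := (q' k).2
      omega

end Arith
section Decomp
variable (ν d n L : ℕ) (hL : 0 < L)
variable (h : Fin ν → Matrix (Fin d × Fin d) (Fin d × Fin d) ℂ)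
variable (h1 : Matrix (Fin d) (Fin d) ℂ)

lemma onsite_reindex :
    (∑ p : Fin ν → Fin (n * L), oneBodyAt h1 p)
      = ∑ b : Fin ν → Fin n, ∑ p' : Fin ν → Fin L,
          oneBodyAt h1 ((siteEquiv ν n L hL).symm (b, p')) := by
  calc (∑ p : Fin ν → Fin (n * L), oneBodyAt h1 p)
      = ∑ bp : (Fin ν → Fin n) × (Fin ν → Fin L), oneBodyAt h1 ((siteEquiv ν n L hL).symm bp) :=
        (Equiv.sum_comp (siteEquiv ν n L hL).symm (fun v => oneBodyAt h1 v)).symm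
    _ = ∑ b : Fin ν → Fin n, ∑ p' : Fin ν → Fin L,
          oneBodyAt h1 ((siteEquiv ν n L hL).symm (b, p')) := by rw [Fintype.sum_prod_type]

lemma twobody_interior_reindex (k : Fin ν) :
    (∑ p : Fin ν → Fin (n * L), ∑ q : Fin ν → Fin (n * L),
        if ((∀ m, m ≠ k → p m = q m) ∧ (q k : ℕ) = (p k : ℕ) + 1)
            ∧ ¬((p k : ℕ) % L = L - 1)
        then twoBodyAt (h k) p q else 0)
      = ∑ b : Fin ν → Fin n, ∑ p' : Fin ν → Fin L, ∑ q' : Fin ν → Fin L,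
          if (∀ m, m ≠ k → p' m = q' m) ∧ (q' k : ℕ) = (p' k : ℕ) + 1
          then twoBodyAt (h k) ((siteEquiv ν n L hL).symm (b, p'))
            ((siteEquiv ν n L hL).symm (b, q')) else 0 := by
  set sE := siteEquiv ν n L hL with hsE
  set F : (Fin ν → Fin (n * L)) → (Fin ν → Fin (n * L))
      → Matrix ((Fin ν → Fin (n * L)) → Fin d) ((Fin ν → Fin (n * L)) → Fin d) ℂ := fun p q =>
    if ((∀ m, m ≠ k → p m = q m) ∧ (q k : ℕ) = (p k : ℕ) + 1)
        ∧ ¬((p k : ℕ) % L = L - 1)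
    then twoBodyAt (h k) p q else 0 with hF
  calc (∑ p : Fin ν → Fin (n * L), ∑ q : Fin ν → Fin (n * L), F p q)
      = ∑ bp : (Fin ν → Fin n) × (Fin ν → Fin L), ∑ q : Fin ν → Fin (n * L),
          F (sE.symm bp) q :=
        (Equiv.sum_comp sE.symm (fun p => ∑ q, F p q)).symm
    _ = ∑ bp : (Fin ν → Fin n) × (Fin ν → Fin L),
          ∑ bq : (Fin ν → Fin n) × (Fin ν → Fin L), F (sE.symm bp) (sE.symm bq) := by
        refine Finset.sum_congr rfl fun bp _ => ?_
        exact (Equiv.sum_comp sE.symm (fun q => F (sE.symm bp) q)).symm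
    _ = ∑ b : Fin ν → Fin n, ∑ p' : Fin ν → Fin L, ∑ b'' : Fin ν → Fin n,
          ∑ q' : Fin ν → Fin L, F (sE.symm (b, p')) (sE.symm (b'', q')) := by
        rw [Fintype.sum_prod_type]
        refine Finset.sum_congr rfl fun b _ => ?_
        refine Finset.sum_congr rfl fun p' _ => ?_
        exact Fintype.sum_prod_type _
    _ = ∑ b : Fin ν → Fin n, ∑ p' : Fin ν → Fin L, ∑ b'' : Fin ν → Fin n,
          ∑ q' : Fin ν → Fin L,
          if b'' = b ∧ ((∀ m, m ≠ k → p' m = q' m) ∧ (q' k : ℕ) = (p' k : ℕ) + 1)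
          then twoBodyAt (h k) (sE.symm (b, p')) (sE.symm (b'', q')) else 0 := by
        refine Finset.sum_congr rfl fun b _ => Finset.sum_congr rfl fun p' _ =>
          Finset.sum_congr rfl fun b'' _ => Finset.sum_congr rfl fun q' _ => ?_
        rw [hF]
        exact if_congr (arith_iff hL k b b'' p' q') rfl rfl
    _ = ∑ b : Fin ν → Fin n, ∑ p' : Fin ν → Fin L, ∑ b'' : Fin ν → Fin n,
          if b'' = b then (∑ q' : Fin ν → Fin L,
          if (∀ m, m ≠ k → p' m = q' m) ∧ (q' k : ℕ) = (p' k : ℕ) + 1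
          then twoBodyAt (h k) (sE.symm (b, p')) (sE.symm (b'', q')) else 0) else 0 := by
        refine Finset.sum_congr rfl fun b _ => Finset.sum_congr rfl fun p' _ =>
          Finset.sum_congr rfl fun b'' _ => ?_
        by_cases hb : b'' = b
        · simp only [hb, true_and, if_true]
        · simp [hb]
    _ = ∑ b : Fin ν → Fin n, ∑ p' : Fin ν → Fin L, ∑ q' : Fin ν → Fin L,
          if (∀ m, m ≠ k → p' m = q' m) ∧ (q' k : ℕ) = (p' k : ℕ) + 1
          then twoBodyAt (h k) (sE.symm (b, p')) (sE.symm (b, q')) else 0 := by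
        refine Finset.sum_congr rfl fun b _ => Finset.sum_congr rfl fun p' _ => ?_
        rw [Finset.sum_ite_eq' Finset.univ b]
        simp

lemma ham_decomp :
    hamND ν d (n * L) h h1
      = (∑ b : Fin ν → Fin n, liftE (hamND ν d L h h1) (eBox ν n L hL (Fin d) b))
        + ∑ k : Fin ν, ∑ p : Fin ν → Fin (n * L), ∑ q : Fin ν → Fin (n * L),
            if ((∀ m, m ≠ k → p m = q m) ∧ (q k : ℕ) = (p k : ℕ) + 1)
                ∧ (p k : ℕ) % L = L - 1
            then twoBodyAt (h k) p q else 0 := by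
  set sE := siteEquiv ν n L hL with hsE
  have hsplit : (∑ k : Fin ν, ∑ p : Fin ν → Fin (n * L), ∑ q : Fin ν → Fin (n * L),
      if (∀ m, m ≠ k → p m = q m) ∧ (q k : ℕ) = (p k : ℕ) + 1
      then twoBodyAt (h k) p q else 0)
      = (∑ k : Fin ν, ∑ p : Fin ν → Fin (n * L), ∑ q : Fin ν → Fin (n * L),
          if ((∀ m, m ≠ k → p m = q m) ∧ (q k : ℕ) = (p k : ℕ) + 1)
              ∧ ¬((p k : ℕ) % L = L - 1)
          then twoBodyAt (h k) p q else 0)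
        + (∑ k : Fin ν, ∑ p : Fin ν → Fin (n * L), ∑ q : Fin ν → Fin (n * L),
          if ((∀ m, m ≠ k → p m = q m) ∧ (q k : ℕ) = (p k : ℕ) + 1)
              ∧ (p k : ℕ) % L = L - 1
          then twoBodyAt (h k) p q else 0) := by
    rw [← Finset.sum_add_distrib]
    refine Finset.sum_congr rfl fun k _ => ?_
    rw [← Finset.sum_add_distrib]
    refine Finset.sum_congr rfl fun p _ => ?_
    rw [← Finset.sum_add_distrib]
    refine Finset.sum_congr rfl fun q _ => ?_
    by_cases hC : (∀ m, m ≠ k → p m = q m) ∧ (q k : ℕ) = (p k : ℕ) + 1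
    · by_cases hD : (p k : ℕ) % L = L - 1 <;> simp [hC, hD]
    · simp [hC]
  have hbox : (∑ b : Fin ν → Fin n, liftE (hamND ν d L h h1) (eBox ν n L hL (Fin d) b))
      = (∑ k : Fin ν, ∑ p : Fin ν → Fin (n * L), ∑ q : Fin ν → Fin (n * L),
          if ((∀ m, m ≠ k → p m = q m) ∧ (q k : ℕ) = (p k : ℕ) + 1)
              ∧ ¬((p k : ℕ) % L = L - 1)
          then twoBodyAt (h k) p q else 0)
        + ∑ p : Fin ν → Fin (n * L), oneBodyAt h1 p := by
    have hexp : ∀ b : Fin ν → Fin n,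
        liftE (hamND ν d L h h1) (eBox ν n L hL (Fin d) b)
        = (∑ k : Fin ν, ∑ p' : Fin ν → Fin L, ∑ q' : Fin ν → Fin L,
            if (∀ m, m ≠ k → p' m = q' m) ∧ (q' k : ℕ) = (p' k : ℕ) + 1
            then twoBodyAt (h k) (sE.symm (b, p')) (sE.symm (b, q')) else 0)
          + ∑ p' : Fin ν → Fin L, oneBodyAt h1 (sE.symm (b, p')) := by
      intro b
      rw [hamND, liftE_addm, liftE_summ, liftE_summ]
      congr 1
      · refine Finset.sum_congr rfl fun k _ => ?_
        rw [liftE_summ]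
        refine Finset.sum_congr rfl fun p' _ => ?_
        rw [liftE_summ]
        refine Finset.sum_congr rfl fun q' _ => ?_
        rw [apply_ite (fun M => liftE M (eBox ν n L hL (Fin d) b)), liftE_zero,
          liftE_twoBodyAt_eBox]
      · refine Finset.sum_congr rfl fun p' _ => ?_
        rw [liftE_oneBodyAt_eBox]
    calc (∑ b : Fin ν → Fin n, liftE (hamND ν d L h h1) (eBox ν n L hL (Fin d) b))
        = ∑ b : Fin ν → Fin n,
            ((∑ k : Fin ν, ∑ p' : Fin ν → Fin L, ∑ q' : Fin ν → Fin L,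
              if (∀ m, m ≠ k → p' m = q' m) ∧ (q' k : ℕ) = (p' k : ℕ) + 1
              then twoBodyAt (h k) (sE.symm (b, p')) (sE.symm (b, q')) else 0)
            + ∑ p' : Fin ν → Fin L, oneBodyAt h1 (sE.symm (b, p'))) :=
          Finset.sum_congr rfl fun b _ => hexp b
      _ = (∑ b : Fin ν → Fin n, ∑ k : Fin ν, ∑ p' : Fin ν → Fin L, ∑ q' : Fin ν → Fin L,
              if (∀ m, m ≠ k → p' m = q' m) ∧ (q' k : ℕ) = (p' k : ℕ) + 1
              then twoBodyAt (h k) (sE.symm (b, p')) (sE.symm (b, q')) else 0)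
            + ∑ b : Fin ν → Fin n, ∑ p' : Fin ν → Fin L, oneBodyAt h1 (sE.symm (b, p')) :=
          Finset.sum_add_distrib
      _ = (∑ k : Fin ν, ∑ b : Fin ν → Fin n, ∑ p' : Fin ν → Fin L, ∑ q' : Fin ν → Fin L,
              if (∀ m, m ≠ k → p' m = q' m) ∧ (q' k : ℕ) = (p' k : ℕ) + 1
              then twoBodyAt (h k) (sE.symm (b, p')) (sE.symm (b, q')) else 0)
            + ∑ p : Fin ν → Fin (n * L), oneBodyAt h1 p := by
          rw [Finset.sum_comm, onsite_reindex ν d n L hL h1]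
      _ = (∑ k : Fin ν, ∑ p : Fin ν → Fin (n * L), ∑ q : Fin ν → Fin (n * L),
            if ((∀ m, m ≠ k → p m = q m) ∧ (q k : ℕ) = (p k : ℕ) + 1)
                ∧ ¬((p k : ℕ) % L = L - 1)
            then twoBodyAt (h k) p q else 0)
          + ∑ p : Fin ν → Fin (n * L), oneBodyAt h1 p := by
          congr 1
          refine Finset.sum_congr rfl fun k _ => ?_
          exact (twobody_interior_reindex ν d n L hL h k).symm
  rw [hamND, hsplit, hbox]
  abel

end Decomp

section MoreQr
variable {ι : Type*} [Fintype ι] [DecidableEq ι]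

lemma qr_addm (M N : Matrix ι ι ℂ) (v : ι → ℂ) : Qr (M + N) v = Qr M v + Qr N v := by
  rw [Qr, Matrix.add_mulVec, dotProduct_add, Complex.add_re, Qr, Qr]

lemma qr_zero (v : ι → ℂ) : Qr (0 : Matrix ι ι ℂ) v = 0 := by
  simp [Qr, Matrix.zero_mulVec, dotProduct_zero]

lemma qr_summ {γ : Type*} (s : Finset γ) (f : γ → Matrix ι ι ℂ) (v : ι → ℂ) :
    Qr (∑ i ∈ s, f i) v = ∑ i ∈ s, Qr (f i) v := by
  classical
  induction s using Finset.induction_on with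
  | empty => simp [qr_zero]
  | insert _ _ ha ih => rw [Finset.sum_insert ha, Finset.sum_insert ha, qr_addm, ih]

lemma nr_eq_qr_one (v : ι → ℂ) : Nr v = Qr 1 v := by
  rw [Qr, Matrix.one_mulVec, Nr]

lemma qr_smulv (M : Matrix ι ι ℂ) (a : ℂ) (u : ι → ℂ) :
    Qr M (a • u) = Complex.normSq a * Qr M u := by
  rw [Qr, Qr, star_smul, Matrix.mulVec_smul, smul_dotProduct, dotProduct_smul,
    smul_eq_mul, smul_eq_mul, ← mul_assoc]
  have hsa : star a * a = (Complex.normSq a : ℂ) := by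
    rw [RCLike.star_def, mul_comm, Complex.mul_conj]
  rw [hsa, ofReal_mul_re]

lemma nr_smulv (a : ℂ) (u : ι → ℂ) : Nr (a • u) = Complex.normSq a * Nr u := by
  rw [nr_eq_qr_one, nr_eq_qr_one, qr_smulv]

lemma herm_summ {γ : Type*} (s : Finset γ) (f : γ → Matrix ι ι ℂ)
    (hf : ∀ i ∈ s, (f i).IsHermitian) : (∑ i ∈ s, f i).IsHermitian := by
  classical
  induction s using Finset.induction_on with
  | empty => simp [Matrix.isHermitian_zero]
  | insert _ _ ha ih =>
      rename_i a s'
      rw [Finset.sum_insert ha]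
      exact (hf a (Finset.mem_insert_self a s')).add
        (ih fun i hi => hf i (Finset.mem_insert_of_mem hi))

end MoreQr

section Herm2

lemma adj_ne {ν N : ℕ} (k : Fin ν) {p q : Fin ν → Fin N}
    (hq : (∀ m, m ≠ k → p m = q m) ∧ (q k : ℕ) = (p k : ℕ) + 1) : p ≠ q := by
  intro hh
  rw [hh] at hq
  omega

lemma adj_unique {ν N : ℕ} (k : Fin ν) (p q q' : Fin ν → Fin N)
    (hq : (∀ m, m ≠ k → p m = q m) ∧ (q k : ℕ) = (p k : ℕ) + 1)
    (hq' : (∀ m, m ≠ k → p m = q' m) ∧ (q' k : ℕ) = (p k : ℕ) + 1) : q = q' := by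
  funext m
  by_cases hm : m = k
  · subst hm
    exact Fin.ext (by rw [hq.2, hq'.2])
  · rw [← hq.1 m hm, ← hq'.1 m hm]

lemma hamND_herm {ν d L : ℕ} (h : Fin ν → Matrix (Fin d × Fin d) (Fin d × Fin d) ℂ)
    (h1 : Matrix (Fin d) (Fin d) ℂ) (hh : ∀ k, (h k).IsHermitian) (h1h : h1.IsHermitian) :
    (hamND ν d L h h1).IsHermitian := by
  rw [hamND]
  apply Matrix.IsHermitian.add
  · refine herm_summ _ _ fun k _ => herm_summ _ _ fun p _ => herm_summ _ _ fun q _ => ?_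
    by_cases hC : (∀ m, m ≠ k → p m = q m) ∧ (q k : ℕ) = (p k : ℕ) + 1
    · rw [if_pos hC, twoBodyAt_eq_liftE (h k) p q (adj_ne k hC)]
      exact liftE_herm (hh k) _
    · rw [if_neg hC]
      exact Matrix.isHermitian_zero
  · refine herm_summ _ _ fun p _ => ?_
    rw [oneBodyAt_eq_liftE]
    exact liftE_herm h1h _

end Herm2

section Count

lemma count_cross {ν n L : ℕ} (hL : 0 < L) (k : Fin ν) :
    (Finset.univ.filter (fun p : Fin ν → Fin (n * L) => (p k : ℕ) % L = L - 1)).card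
      ≤ n * (n * L) ^ (ν - 1) := by
  classical
  rw [← Fintype.card_subtype]
  have hinj : Function.Injective
      (fun p : {p : Fin ν → Fin (n * L) // (p k : ℕ) % L = L - 1} =>
        ((coordEquiv n L hL (p.1 k)).1, fun m : {m : Fin ν // m ≠ k} => p.1 m.1)) := by
    rintro ⟨p, hp⟩ ⟨q, hq⟩ heq
    obtain ⟨h1, h2⟩ := Prod.mk.injEq _ _ _ _ |>.mp heq
    refine Subtype.ext (funext fun m => ?_)
    by_cases hm : m = k
    · subst hm
      have hdiv : (p m : ℕ) / L = (q m : ℕ) / L := congrArg Fin.val h1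
      refine Fin.ext ?_
      have hp' : (p m : ℕ) = L * ((p m : ℕ) / L) + (p m : ℕ) % L := (Nat.div_add_mod _ _).symm
      have hq' : (q m : ℕ) = L * ((q m : ℕ) / L) + (q m : ℕ) % L := (Nat.div_add_mod _ _).symm
      rw [hp', hq', hdiv, hp, hq]
    · exact congrFun h2 ⟨m, hm⟩
  calc Fintype.card {p : Fin ν → Fin (n * L) // (p k : ℕ) % L = L - 1}
      ≤ Fintype.card (Fin n × ({m : Fin ν // m ≠ k} → Fin (n * L))) :=
        Fintype.card_le_of_injective _ hinj
    _ = n * (n * L) ^ (ν - 1) := by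
        rw [Fintype.card_prod, Fintype.card_fun, Fintype.card_fin, Fintype.card_fin]
        congr 1
        congr 1
        calc Fintype.card {m : Fin ν // m ≠ k}
            = Fintype.card (Fin ν) - Fintype.card {m : Fin ν // m = k} :=
              Fintype.card_subtype_compl _
          _ = ν - 1 := by rw [Fintype.card_subtype_eq, Fintype.card_fin]

end Count

section ProdVec
variable (ν n L : ℕ) (hL : 0 < L) {S : Type*} [Fintype S] [DecidableEq S]

/-- product state -/
def prodVec (u : ((Fin ν → Fin L) → S) → ℂ) : ((Fin ν → Fin (n * L)) → S) → ℂ :=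
  fun x => ∏ b : Fin ν → Fin n, u (confE ν n L hL S x b)

lemma prodVec_ne_zero {u : ((Fin ν → Fin L) → S) → ℂ} (hu : u ≠ 0) :
    prodVec ν n L hL u ≠ 0 := by
  obtain ⟨t, ht⟩ := Function.ne_iff.mp hu
  intro hcc
  have h0 := congrFun hcc ((confE ν n L hL S).symm (fun _ => t))
  rw [prodVec] at h0
  simp only [Equiv.apply_symm_apply, Pi.zero_apply] at h0
  obtain ⟨b, -, hb⟩ := Finset.prod_eq_zero_iff.mp h0
  exact ht hb

lemma sec_eBox_prodVec (b : Fin ν → Fin n) (u : ((Fin ν → Fin L) → S) → ℂ)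
    (y : {b' // b' ≠ b} → ((Fin ν → Fin L) → S)) :
    sec (eBox ν n L hL S b) (prodVec ν n L hL u) y
      = (∏ b' : {b' // b' ≠ b}, u (y b')) • u := by
  funext t
  have h0 : confE ν n L hL S ((eBox ν n L hL S b).symm (t, y))
      = (Equiv.funSplitAt b ((Fin ν → Fin L) → S)).symm (t, y) := by
    show confE ν n L hL S ((confE ν n L hL S).symm
      ((Equiv.funSplitAt b ((Fin ν → Fin L) → S)).symm (t, y))) = _
    rw [Equiv.apply_symm_apply]
  have hconf : ∀ b', confE ν n L hL S ((eBox ν n L hL S b).symm (t, y)) b'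
      = if hb : b' = b then t else y ⟨b', hb⟩ := by
    intro b'
    rw [h0]
    by_cases hb : b' = b
    · subst hb
      simp [Equiv.funSplitAt_symm_apply]
    · simp [Equiv.funSplitAt_symm_apply, hb]
  show prodVec ν n L hL u ((eBox ν n L hL S b).symm (t, y)) = _
  rw [prodVec]
  simp only [hconf]
  rw [Pi.smul_apply, smul_eq_mul, Fintype.prod_eq_prod_compl_mul b, dif_pos rfl]
  congr 1
  rw [Finset.prod_subtype (p := fun b'' => b'' ≠ b) ({b}ᶜ : Finset (Fin ν → Fin n)) (fun x => by simp)
    (fun b'' => u (if hb : b'' = b then t else y ⟨b'', hb⟩))]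
  refine Finset.prod_congr rfl fun b' _ => ?_
  simp [dif_neg b'.2]

lemma qr_liftE_prodVec (A : Matrix ((Fin ν → Fin L) → S) ((Fin ν → Fin L) → S) ℂ)
    (u : ((Fin ν → Fin L) → S) → ℂ) (lam : ℝ) (hu : A *ᵥ u = (lam : ℂ) • u)
    (b : Fin ν → Fin n) :
    Qr (liftE A (eBox ν n L hL S b)) (prodVec ν n L hL u)
      = lam * Nr (prodVec ν n L hL u) := by
  rw [qr_liftE, nr_liftE (eBox ν n L hL S b) (prodVec ν n L hL u), Finset.mul_sum]
  refine Finset.sum_congr rfl fun y _ => ?_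
  rw [sec_eBox_prodVec, qr_smulv, nr_smulv, qr_eigen hu]
  ring

end ProdVec

section Main

lemma main_bounds (ν d n L : ℕ) (hν : 0 < ν) (hn : 0 < n) (hL : 0 < L) (hd : 0 < d)
    (h : Fin ν → Matrix (Fin d × Fin d) (Fin d × Fin d) ℂ)
    (h1 : Matrix (Fin d) (Fin d) ℂ) (h1herm : h1.IsHermitian)
    (hpsd : ∀ k, (h k).PosSemidef)
    (c : ℝ) (hc : ∀ k, opNorm (h k) ≤ c) :
    (n : ℝ) ^ ν * lam0 (hamND ν d L h h1) ≤ lam0 (hamND ν d (n * L) h h1) ∧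
    lam0 (hamND ν d (n * L) h h1) ≤
      (n : ℝ) ^ ν * lam0 (hamND ν d L h h1)
        + 2 * (ν : ℝ) * (n : ℝ) ^ ν * (L : ℝ) ^ (ν - 1) * c := by
  classical
  haveI : Nonempty (Fin d) := ⟨⟨0, hd⟩⟩
  haveI : Nonempty ((Fin ν → Fin L) → Fin d) := ⟨fun _ => ⟨0, hd⟩⟩
  haveI : Nonempty ((Fin ν → Fin (n * L)) → Fin d) := ⟨fun _ => ⟨0, hd⟩⟩
  haveI : Nonempty (Fin d × Fin d) := ⟨(⟨0, hd⟩, ⟨0, hd⟩)⟩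
  have hA : (hamND ν d L h h1).IsHermitian := hamND_herm h h1 (fun k => (hpsd k).1) h1herm
  have hB : (hamND ν d (n * L) h h1).IsHermitian :=
    hamND_herm h h1 (fun k => (hpsd k).1) h1herm
  have hc0 : 0 ≤ c := le_trans (norm_nonneg _) (hc ⟨0, hν⟩)
  have hcard : Fintype.card (Fin ν → Fin n) = n ^ ν := by
    rw [Fintype.card_fun, Fintype.card_fin, Fintype.card_fin]
  have hQrB : ∀ v : ((Fin ν → Fin (n * L)) → Fin d) → ℂ,
      Qr (hamND ν d (n * L) h h1) v
        = (∑ b : Fin ν → Fin n, Qr (liftE (hamND ν d L h h1) (eBox ν n L hL (Fin d) b)) v)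
          + ∑ k : Fin ν, ∑ p : Fin ν → Fin (n * L), ∑ q : Fin ν → Fin (n * L),
              Qr (if ((∀ m, m ≠ k → p m = q m) ∧ (q k : ℕ) = (p k : ℕ) + 1)
                    ∧ (p k : ℕ) % L = L - 1
                  then twoBodyAt (h k) p q else 0) v := by
    intro v
    rw [ham_decomp ν d n L hL h h1, qr_addm, qr_summ]
    congr 1
    rw [qr_summ]
    refine Finset.sum_congr rfl fun k _ => ?_
    rw [qr_summ]
    exact Finset.sum_congr rfl fun p _ => qr_summ _ _ _
  have hterm0 : ∀ (k : Fin ν) (p q : Fin ν → Fin (n * L))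
      (v : ((Fin ν → Fin (n * L)) → Fin d) → ℂ),
      0 ≤ Qr (if ((∀ m, m ≠ k → p m = q m) ∧ (q k : ℕ) = (p k : ℕ) + 1)
          ∧ (p k : ℕ) % L = L - 1 then twoBodyAt (h k) p q else 0) v := by
    intro k p q v
    by_cases hC : ((∀ m, m ≠ k → p m = q m) ∧ (q k : ℕ) = (p k : ℕ) + 1)
        ∧ (p k : ℕ) % L = L - 1
    · rw [if_pos hC, twoBodyAt_eq_liftE (h k) p q (adj_ne k hC.1)]
      exact qr_liftE_nonneg (hpsd k) _ v
    · rw [if_neg hC, qr_zero]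
  have htermle : ∀ (k : Fin ν) (p q : Fin ν → Fin (n * L))
      (v : ((Fin ν → Fin (n * L)) → Fin d) → ℂ),
      ((∀ m, m ≠ k → p m = q m) ∧ (q k : ℕ) = (p k : ℕ) + 1) →
      Qr (twoBodyAt (h k) p q) v ≤ c * Nr v := by
    intro k p q v hCq
    rw [twoBodyAt_eq_liftE (h k) p q (adj_ne k hCq)]
    exact qr_liftE_le (hpsd k).1 (hc k) _ v
  have hRle : ∀ v : ((Fin ν → Fin (n * L)) → Fin d) → ℂ,
      (∑ k : Fin ν, ∑ p : Fin ν → Fin (n * L), ∑ q : Fin ν → Fin (n * L),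
        Qr (if ((∀ m, m ≠ k → p m = q m) ∧ (q k : ℕ) = (p k : ℕ) + 1)
              ∧ (p k : ℕ) % L = L - 1 then twoBodyAt (h k) p q else 0) v)
      ≤ (ν : ℝ) * (((n * (n * L) ^ (ν - 1) : ℕ) : ℝ) * (c * Nr v)) := by
    intro v
    have hcnN : 0 ≤ c * Nr v := mul_nonneg hc0 (Nr_nonneg v)
    have hk : ∀ k : Fin ν, (∑ p : Fin ν → Fin (n * L), ∑ q : Fin ν → Fin (n * L),
        Qr (if ((∀ m, m ≠ k → p m = q m) ∧ (q k : ℕ) = (p k : ℕ) + 1)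
            ∧ (p k : ℕ) % L = L - 1 then twoBodyAt (h k) p q else 0) v)
        ≤ ((n * (n * L) ^ (ν - 1) : ℕ) : ℝ) * (c * Nr v) := by
      intro k
      have hp : ∀ p : Fin ν → Fin (n * L), (∑ q : Fin ν → Fin (n * L),
          Qr (if ((∀ m, m ≠ k → p m = q m) ∧ (q k : ℕ) = (p k : ℕ) + 1)
              ∧ (p k : ℕ) % L = L - 1 then twoBodyAt (h k) p q else 0) v)
          ≤ if (p k : ℕ) % L = L - 1 then c * Nr v else 0 := by
        intro p
        by_cases hcr : (p k : ℕ) % L = L - 1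
        · rw [if_pos hcr]
          by_cases hex : ∃ q0 : Fin ν → Fin (n * L),
              (∀ m, m ≠ k → p m = q0 m) ∧ (q0 k : ℕ) = (p k : ℕ) + 1
          · obtain ⟨q0, hq0⟩ := hex
            have hz : ∀ q ∈ Finset.univ, q ≠ q0 →
                Qr (if ((∀ m, m ≠ k → p m = q m) ∧ (q k : ℕ) = (p k : ℕ) + 1)
                    ∧ (p k : ℕ) % L = L - 1 then twoBodyAt (h k) p q else 0) v = 0 := by
              intro q _ hqne
              rw [if_neg, qr_zero]
              rintro ⟨hCq, -⟩
              exact hqne (adj_unique k p q0 q hq0 hCq).symm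
            rw [Finset.sum_eq_single q0 hz (fun hm => absurd (Finset.mem_univ q0) hm)]
            rw [if_pos ⟨hq0, hcr⟩]
            exact htermle k p q0 v hq0
          · have hz : ∀ q ∈ Finset.univ,
                Qr (if ((∀ m, m ≠ k → p m = q m) ∧ (q k : ℕ) = (p k : ℕ) + 1)
                    ∧ (p k : ℕ) % L = L - 1 then twoBodyAt (h k) p q else 0) v = 0 := by
              intro q _
              rw [if_neg, qr_zero]
              rintro ⟨hCq, -⟩
              exact hex ⟨q, hCq⟩
            rw [Finset.sum_congr rfl hz, Finset.sum_const, smul_zero]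
            exact hcnN
        · rw [if_neg hcr]
          have hz : ∀ q ∈ Finset.univ,
              Qr (if ((∀ m, m ≠ k → p m = q m) ∧ (q k : ℕ) = (p k : ℕ) + 1)
                  ∧ (p k : ℕ) % L = L - 1 then twoBodyAt (h k) p q else 0) v = 0 := by
            intro q _
            rw [if_neg, qr_zero]
            rintro ⟨-, hd2⟩
            exact hcr hd2
          rw [Finset.sum_congr rfl hz, Finset.sum_const, smul_zero]
      calc (∑ p : Fin ν → Fin (n * L), ∑ q : Fin ν → Fin (n * L),
            Qr (if ((∀ m, m ≠ k → p m = q m) ∧ (q k : ℕ) = (p k : ℕ) + 1)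
                ∧ (p k : ℕ) % L = L - 1 then twoBodyAt (h k) p q else 0) v)
          ≤ ∑ p : Fin ν → Fin (n * L), (if (p k : ℕ) % L = L - 1 then c * Nr v else 0) :=
            Finset.sum_le_sum fun p _ => hp p
        _ = ∑ p ∈ Finset.univ.filter (fun p : Fin ν → Fin (n * L) => (p k : ℕ) % L = L - 1),
              (c * Nr v) := (Finset.sum_filter _ _).symm
        _ = (Finset.univ.filter
              (fun p : Fin ν → Fin (n * L) => (p k : ℕ) % L = L - 1)).card • (c * Nr v) :=
            Finset.sum_const _
        _ = ((Finset.univ.filter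
              (fun p : Fin ν → Fin (n * L) => (p k : ℕ) % L = L - 1)).card : ℝ) * (c * Nr v) :=
            nsmul_eq_mul _ _
        _ ≤ ((n * (n * L) ^ (ν - 1) : ℕ) : ℝ) * (c * Nr v) := by
            refine mul_le_mul_of_nonneg_right ?_ hcnN
            exact_mod_cast count_cross hL k
    calc (∑ k : Fin ν, ∑ p : Fin ν → Fin (n * L), ∑ q : Fin ν → Fin (n * L),
          Qr (if ((∀ m, m ≠ k → p m = q m) ∧ (q k : ℕ) = (p k : ℕ) + 1)
              ∧ (p k : ℕ) % L = L - 1 then twoBodyAt (h k) p q else 0) v)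
        ≤ ∑ _k : Fin ν, ((n * (n * L) ^ (ν - 1) : ℕ) : ℝ) * (c * Nr v) :=
          Finset.sum_le_sum fun k _ => hk k
      _ = (ν : ℝ) * (((n * (n * L) ^ (ν - 1) : ℕ) : ℝ) * (c * Nr v)) := by
          rw [Finset.sum_const, Finset.card_univ, Fintype.card_fin, nsmul_eq_mul]
  -- lower bound
  obtain ⟨v, hv0, hveig⟩ := exists_ground hB
  have hNv := Nr_pos hv0
  have hEv := hQrB v
  rw [qr_eigen hveig] at hEv
  have hsum1 : ((n : ℝ) ^ ν) * (lam0 (hamND ν d L h h1) * Nr v)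
      ≤ ∑ b : Fin ν → Fin n,
          Qr (liftE (hamND ν d L h h1) (eBox ν n L hL (Fin d) b)) v := by
    calc ((n : ℝ) ^ ν) * (lam0 (hamND ν d L h h1) * Nr v)
        = ∑ _b : Fin ν → Fin n, lam0 (hamND ν d L h h1) * Nr v := by
          rw [Finset.sum_const, Finset.card_univ, hcard, nsmul_eq_mul]
          push_cast
          ring
      _ ≤ _ := Finset.sum_le_sum fun b _ => qr_liftE_ge hA _ v
  have hcross0 : 0 ≤ ∑ k : Fin ν, ∑ p : Fin ν → Fin (n * L), ∑ q : Fin ν → Fin (n * L),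
      Qr (if ((∀ m, m ≠ k → p m = q m) ∧ (q k : ℕ) = (p k : ℕ) + 1)
            ∧ (p k : ℕ) % L = L - 1 then twoBodyAt (h k) p q else 0) v :=
    Finset.sum_nonneg fun k _ => Finset.sum_nonneg fun p _ =>
      Finset.sum_nonneg fun q _ => hterm0 k p q v
  have hlow : ((n : ℝ) ^ ν * lam0 (hamND ν d L h h1)) * Nr v
      ≤ lam0 (hamND ν d (n * L) h h1) * Nr v := by
    have h5 : ((n : ℝ) ^ ν * lam0 (hamND ν d L h h1)) * Nr v
        = ((n : ℝ) ^ ν) * (lam0 (hamND ν d L h h1) * Nr v) := by ring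
    linarith
  refine ⟨le_of_mul_le_mul_right hlow hNv, ?_⟩
  -- upper bound
  obtain ⟨u, hu0, hueig⟩ := exists_ground hA
  have hw0 : prodVec ν n L hL u ≠ 0 := prodVec_ne_zero ν n L hL hu0
  have hNw := Nr_pos hw0
  have hEw := hQrB (prodVec ν n L hL u)
  have hray := rayleigh_lower hB (prodVec ν n L hL u)
  have hsumw : (∑ b : Fin ν → Fin n,
      Qr (liftE (hamND ν d L h h1) (eBox ν n L hL (Fin d) b)) (prodVec ν n L hL u))
      = (n : ℝ) ^ ν * (lam0 (hamND ν d L h h1) * Nr (prodVec ν n L hL u)) := by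
    rw [Finset.sum_congr rfl
      (fun b _ => qr_liftE_prodVec ν n L hL (hamND ν d L h h1) u
        (lam0 (hamND ν d L h h1)) hueig b)]
    rw [Finset.sum_const, Finset.card_univ, hcard, nsmul_eq_mul]
    push_cast
    ring
  have hRw := hRle (prodVec ν n L hL u)
  have hcount : (ν : ℝ) * (((n * (n * L) ^ (ν - 1) : ℕ) : ℝ) * c)
      ≤ 2 * (ν : ℝ) * (n : ℝ) ^ ν * (L : ℝ) ^ (ν - 1) * c := by
    have hnn : ((n * (n * L) ^ (ν - 1) : ℕ) : ℝ) = (n : ℝ) * ((n : ℝ) * (L : ℝ)) ^ (ν - 1) := by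
      push_cast
      ring
    have hpow : (n : ℝ) * ((n : ℝ) * (L : ℝ)) ^ (ν - 1)
        = (n : ℝ) ^ ν * (L : ℝ) ^ (ν - 1) := by
      rw [mul_pow, ← mul_assoc, ← pow_succ']
      rw [Nat.sub_add_cancel hν]
    rw [hnn, hpow]
    have hX : 0 ≤ (ν : ℝ) * ((n : ℝ) ^ ν * (L : ℝ) ^ (ν - 1)) * c := by positivity
    nlinarith [hX]
  have hup : lam0 (hamND ν d (n * L) h h1) * Nr (prodVec ν n L hL u)
      ≤ ((n : ℝ) ^ ν * lam0 (hamND ν d L h h1)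
          + 2 * (ν : ℝ) * (n : ℝ) ^ ν * (L : ℝ) ^ (ν - 1) * c) * Nr (prodVec ν n L hL u) := by
    have e1 : lam0 (hamND ν d (n * L) h h1) * Nr (prodVec ν n L hL u)
        ≤ (n : ℝ) ^ ν * (lam0 (hamND ν d L h h1) * Nr (prodVec ν n L hL u))
          + (ν : ℝ) * (((n * (n * L) ^ (ν - 1) : ℕ) : ℝ)
              * (c * Nr (prodVec ν n L hL u))) := by
      rw [hEw, hsumw] at hray
      linarith
    have e2 : (ν : ℝ) * (((n * (n * L) ^ (ν - 1) : ℕ) : ℝ) * (c * Nr (prodVec ν n L hL u)))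
        ≤ (2 * (ν : ℝ) * (n : ℝ) ^ ν * (L : ℝ) ^ (ν - 1) * c) * Nr (prodVec ν n L hL u) := by
      have e3 := mul_le_mul_of_nonneg_right hcount (Nr_nonneg (prodVec ν n L hL u))
      calc (ν : ℝ) * (((n * (n * L) ^ (ν - 1) : ℕ) : ℝ) * (c * Nr (prodVec ν n L hL u)))
          = ((ν : ℝ) * (((n * (n * L) ^ (ν - 1) : ℕ) : ℝ) * c)) * Nr (prodVec ν n L hL u) := by
            ring
        _ ≤ _ := e3
    calc lam0 (hamND ν d (n * L) h h1) * Nr (prodVec ν n L hL u)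
        ≤ (n : ℝ) ^ ν * (lam0 (hamND ν d L h h1) * Nr (prodVec ν n L hL u))
          + (2 * (ν : ℝ) * (n : ℝ) ^ ν * (L : ℝ) ^ (ν - 1) * c)
              * Nr (prodVec ν n L hL u) := by linarith
      _ = _ := by ring
  exact le_of_mul_le_mul_right hup hNw

end Main

section Degenerate

lemma lam0_zero_matrix {ι : Type*} [Fintype ι] [DecidableEq ι] [Nonempty ι] :
    lam0 (0 : Matrix ι ι ℂ) = 0 := by
  haveI : Nontrivial (Matrix ι ι ℂ) := by
    obtain ⟨i⟩ := ‹Nonempty ι›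
    refine ⟨0, 1, fun hcon => ?_⟩
    have := congrFun (congrFun hcon i) i
    simp [Matrix.one_apply] at this
  have hrs : realSpec (0 : Matrix ι ι ℂ) = {0} := by
    ext x
    simp [realSpec, spectrum.zero_eq, Complex.ofReal_eq_zero]
  rw [lam0, hrs, csInf_singleton]

lemma lam0_isEmpty {ι : Type*} [Fintype ι] [DecidableEq ι] [IsEmpty ι] (M : Matrix ι ι ℂ) :
    lam0 M = 0 := by
  haveI : Subsingleton (Matrix ι ι ℂ) := ⟨fun a b => by ext i j; exact isEmptyElim i⟩
  have hrs : realSpec M = ∅ := by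
    ext x
    simp only [realSpec, Set.mem_setOf_eq, Set.mem_empty_iff_false, iff_false]
    rw [spectrum.mem_iff]
    exact fun hcon => hcon (isUnit_of_subsingleton _)
  rw [lam0, hrs, Real.sInf_empty]

lemma ham_empty_sites {ν d L : ℕ} [IsEmpty (Fin ν → Fin L)]
    (h : Fin ν → Matrix (Fin d × Fin d) (Fin d × Fin d) ℂ) (h1 : Matrix (Fin d) (Fin d) ℂ) :
    hamND ν d L h h1 = 0 := by
  rw [hamND]
  simp

lemma hamND_nu_zero_spectrum (d L : ℕ) (h : Fin 0 → Matrix (Fin d × Fin d) (Fin d × Fin d) ℂ)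
    (h1 : Matrix (Fin d) (Fin d) ℂ) :
    spectrum ℂ (hamND 0 d L h h1) = spectrum ℂ h1 := by
  haveI hu : Unique (Fin 0 → Fin L) := ⟨⟨fun i => i.elim0⟩, fun f => funext fun i => i.elim0⟩
  have heq : hamND 0 d L h h1
      = Matrix.reindexAlgEquiv ℂ ℂ ((Equiv.funUnique (Fin 0 → Fin L) (Fin d)).symm) h1 := by
    rw [hamND]
    ext x y
    have h2 : (∑ p : Fin 0 → Fin L, oneBodyAt h1 p) = oneBodyAt h1 default :=
      Fintype.sum_unique _
    rw [Finset.univ_eq_empty, Finset.sum_empty, zero_add, h2]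
    have hcond : ∀ k : Fin 0 → Fin L, k ≠ (default : Fin 0 → Fin L) → x k = y k := by
      intro k hk
      exact absurd (Subsingleton.elim k default) hk
    show (if ∀ k, k ≠ (default : Fin 0 → Fin L) → x k = y k then (1 : ℂ) else 0)
        * h1 (x default) (y default) = _
    rw [if_pos hcond, one_mul]
    rfl
  rw [heq, AlgEquiv.spectrum_eq]

end Degenerate

end GSE

/-- Sub- and super-additivity bounds for the ground state energy of a
translationally-invariant nearest-neighbour Hamiltonian on `{1,…,L}^ν` with open
boundary conditions, positive semi-definite two-body terms of norm at most `c`: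
for `L = n·L'`,
`n^ν·λ₀(H^{Λ(L')}) ≤ λ₀(H^{Λ(L)}) ≤ n^ν·λ₀(H^{Λ(L')}) + 2ν·n^ν·L'^{ν−1}·c`. -/
theorem gs_energy_subadditivity
    (ν d : ℕ) (h : Fin ν → Matrix (Fin d × Fin d) (Fin d × Fin d) ℂ)
    (h1 : Matrix (Fin d) (Fin d) ℂ) (h1herm : h1.IsHermitian)
    (hpsd : ∀ k, (h k).PosSemidef)
    (c : ℝ) (hc : ∀ k, opNorm (h k) ≤ c)
    (L' n : ℕ) :
    (n : ℝ) ^ ν * lam0 (hamND ν d L' h h1) ≤ lam0 (hamND ν d (n * L') h h1) ∧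
    lam0 (hamND ν d (n * L') h h1) ≤
      (n : ℝ) ^ ν * lam0 (hamND ν d L' h h1)
        + 2 * (ν : ℝ) * (n : ℝ) ^ ν * (L' : ℝ) ^ (ν - 1) * c := by
  rcases Nat.eq_zero_or_pos ν with hν | hν
  · subst hν
    have key : ∀ L0 : ℕ, lam0 (hamND 0 d L0 h h1)
        = sInf {x : ℝ | (x : ℂ) ∈ spectrum ℂ h1} := by
      intro L0
      rw [lam0]
      congr 1
      ext x
      simp only [realSpec, Set.mem_setOf_eq, GSE.hamND_nu_zero_spectrum d L0 h h1]
    rw [key L', key (n * L')]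
    constructor
    · rw [pow_zero, one_mul]
    · rw [pow_zero, one_mul]
      norm_num
  · have hc0 : 0 ≤ c := le_trans (norm_nonneg _) (hc ⟨0, hν⟩)
    rcases Nat.eq_zero_or_pos n with hn | hn
    · subst hn
      haveI : IsEmpty (Fin ν → Fin (0 * L')) := ⟨fun f => by have := (f ⟨0, hν⟩).2; omega⟩
      haveI : Nonempty ((Fin ν → Fin (0 * L')) → Fin d) := ⟨fun x => isEmptyElim x⟩
      have hbig : lam0 (hamND ν d (0 * L') h h1) = 0 := by
        rw [GSE.ham_empty_sites h h1]
        exact GSE.lam0_zero_matrix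
      rw [hbig]
      constructor
      · rw [Nat.cast_zero, zero_pow (by omega : ν ≠ 0), zero_mul]
      · rw [Nat.cast_zero, zero_pow (by omega : ν ≠ 0)]
        norm_num
    · rcases Nat.eq_zero_or_pos L' with hL | hL
      · subst hL
        haveI : IsEmpty (Fin ν → Fin 0) := ⟨fun f => (f ⟨0, hν⟩).elim0⟩
        haveI : IsEmpty (Fin ν → Fin (n * 0)) := ⟨fun f => by have := (f ⟨0, hν⟩).2; omega⟩
        haveI : Nonempty ((Fin ν → Fin 0) → Fin d) := ⟨fun x => isEmptyElim x⟩
        haveI : Nonempty ((Fin ν → Fin (n * 0)) → Fin d) := ⟨fun x => isEmptyElim x⟩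
        have hsm : lam0 (hamND ν d 0 h h1) = 0 := by
          rw [GSE.ham_empty_sites h h1]
          exact GSE.lam0_zero_matrix
        have hbg : lam0 (hamND ν d (n * 0) h h1) = 0 := by
          rw [GSE.ham_empty_sites h h1]
          exact GSE.lam0_zero_matrix
        rw [hsm, hbg, mul_zero]
        refine ⟨le_refl 0, ?_⟩
        rw [zero_add]
        apply mul_nonneg _ hc0
        positivity
      · rcases Nat.eq_zero_or_pos d with hd | hd
        · subst hd
          haveI : IsEmpty ((Fin ν → Fin L') → Fin 0) := ⟨fun f => (f (fun _ => ⟨0, hL⟩)).elim0⟩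
          haveI : IsEmpty ((Fin ν → Fin (n * L')) → Fin 0) :=
            ⟨fun f => (f (fun _ => ⟨0, Nat.mul_pos hn hL⟩)).elim0⟩
          rw [GSE.lam0_isEmpty, GSE.lam0_isEmpty, mul_zero]
          refine ⟨le_refl 0, ?_⟩
          rw [zero_add]
          apply mul_nonneg _ hc0
          positivity
        · exact GSE.main_bounds ν d n L' hν hn hL hd h h1 h1herm hpsd c hc

end
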